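/- For k = 1,…,L let σ_k : ℝ → ℝ be 1-Lipschitz, let W_k be a real h_k × h_{k−1} matrix and b_k ∈ ℝ^{h_k}, and let f_k(x) = σ_k(W_k x + b_k) with σ_k applied entrywise. Set A_k = max_j Σ_i |W_k(j,i)| and C_ℓ = max_{j,i} |W_ℓ(j,i)|. Define the ℓ-th activation edge-weight map Φ_ℓ : ℝ^{h_0} → ℝ^{h_ℓ × h_{ℓ−1}} by Φ_ℓ(x)(j,i) = |W_ℓ(j,i) · (f_{ℓ−1} ∘ ⋯ ∘ f_1(x))(i)|. Then for all x, y ∈ ℝ^{h_0}, max_{j,i} |Φ_ℓ(x)(j,i) − Φ_ℓ(y)(j,i)| ≤ C_ℓ · (∏_{k=1}^{ℓ−1} A_k) · ‖x − y‖_∞. -/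

import Mathlib

/-- For layers `f k x = σ k (W k x + b k)` with 1-Lipschitz activations
(here `f k` is the `(k+1)`-th layer of the paper), the activation edge-weight map
`Φ x j i = |W ℓ j i * (F ℓ x) i|` of the `(ℓ+1)`-th layer (whose layer input
`F ℓ x` is the composition of the first `ℓ` layers applied to `x`) satisfies
`max_{j,i} |Φ x j i - Φ y j i| ≤ C ℓ * (∏_{k<ℓ} A k) * ‖x - y‖_∞`, where
`A k = max_j Σ_i |W k j i|` and `C ℓ = max_{j,i} |W ℓ j i|`. -/
theorem activation_edge_weight_map_lipschitz
    (h : ℕ → ℕ) (hpos : ∀ k, 0 < h k)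
    (σ : ℕ → ℝ → ℝ) (hσ : ∀ (k : ℕ) (s t : ℝ), |σ k s - σ k t| ≤ |s - t|)
    (W : (k : ℕ) → Matrix (Fin (h (k + 1))) (Fin (h k)) ℝ)
    (b : (k : ℕ) → Fin (h (k + 1)) → ℝ)
    (f : (k : ℕ) → (Fin (h k) → ℝ) → (Fin (h (k + 1)) → ℝ))
    (hf : ∀ (k : ℕ) (x : Fin (h k) → ℝ) (j : Fin (h (k + 1))),
      f k x j = σ k ((W k).mulVec x j + b k j))
    (A : ℕ → ℝ)
    (hA : ∀ k, A k = Finset.univ.sup'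
        (Finset.univ_nonempty_iff.mpr ⟨⟨0, hpos (k + 1)⟩⟩)
        (fun j : Fin (h (k + 1)) => ∑ i : Fin (h k), |W k j i|))
    (F : (ℓ : ℕ) → (Fin (h 0) → ℝ) → (Fin (h ℓ) → ℝ))
    (hF0 : ∀ x, F 0 x = x)
    (hFs : ∀ (ℓ : ℕ) (x : Fin (h 0) → ℝ), F (ℓ + 1) x = f ℓ (F ℓ x))
    (ℓ : ℕ)
    (C : ℝ)
    (hC : C = Finset.univ.sup'
        (Finset.univ_nonempty_iff.mpr ⟨⟨⟨0, hpos (ℓ + 1)⟩, ⟨0, hpos ℓ⟩⟩⟩)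
        (fun p : Fin (h (ℓ + 1)) × Fin (h ℓ) => |W ℓ p.1 p.2|))
    (Φ : (Fin (h 0) → ℝ) → Fin (h (ℓ + 1)) → Fin (h ℓ) → ℝ)
    (hΦ : ∀ (x : Fin (h 0) → ℝ) (j : Fin (h (ℓ + 1))) (i : Fin (h ℓ)),
      Φ x j i = |W ℓ j i * F ℓ x i|) :
    ∀ x y : Fin (h 0) → ℝ,
      Finset.univ.sup'
        (Finset.univ_nonempty_iff.mpr ⟨⟨⟨0, hpos (ℓ + 1)⟩, ⟨0, hpos ℓ⟩⟩⟩)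
        (fun p : Fin (h (ℓ + 1)) × Fin (h ℓ) => |Φ x p.1 p.2 - Φ y p.1 p.2|)
      ≤ C * (∏ k ∈ Finset.range ℓ, A k) * ‖x - y‖ := by

  intro x y
  have hAnn : ∀ k, 0 ≤ A k := by
    intro k
    rw [hA k]
    refine le_trans ?_ (Finset.le_sup' _ (Finset.mem_univ ⟨0, hpos (k+1)⟩))
    exact Finset.sum_nonneg fun i _ => abs_nonneg _
  have hkey : ∀ (m : ℕ) (i : Fin (h m)),
      |F m x i - F m y i| ≤ (∏ k ∈ Finset.range m, A k) * ‖x - y‖ := by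
    intro m
    induction m with
    | zero =>
      intro i
      simp only [hF0, Finset.range_zero, Finset.prod_empty, one_mul]
      have := norm_le_pi_norm (x - y) i
      simpa [Real.norm_eq_abs] using this
    | succ n ih =>
      intro j
      rw [hFs, hFs, hf, hf]
      refine le_trans (hσ _ _ _) ?_
      have : (W n).mulVec (F n x) j + b n j - ((W n).mulVec (F n y) j + b n j)
          = ∑ i : Fin (h n), W n j i * (F n x i - F n y i) := by
        simp only [Matrix.mulVec, dotProduct, mul_sub, Finset.sum_sub_distrib]
        ring
      rw [this]
      refine le_trans (Finset.abs_sum_le_sum_abs _ _) ?_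
      have h1 : ∀ i : Fin (h n), |W n j i * (F n x i - F n y i)|
          ≤ |W n j i| * ((∏ k ∈ Finset.range n, A k) * ‖x - y‖) := by
        intro i
        rw [abs_mul]
        exact mul_le_mul_of_nonneg_left (ih i) (abs_nonneg _)
      refine le_trans (Finset.sum_le_sum fun i _ => h1 i) ?_
      rw [← Finset.sum_mul, Finset.prod_range_succ]
      have hAsum : (∑ i : Fin (h n), |W n j i|) ≤ A n := by
        rw [hA n]
        exact Finset.le_sup' (fun j : Fin (h (n+1)) => ∑ i : Fin (h n), |W n j i|) (Finset.mem_univ j)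
      have hnn : 0 ≤ (∏ k ∈ Finset.range n, A k) * ‖x - y‖ :=
        mul_nonneg (Finset.prod_nonneg fun k _ => hAnn k) (norm_nonneg _)
      calc (∑ i : Fin (h n), |W n j i|) * ((∏ k ∈ Finset.range n, A k) * ‖x - y‖)
          ≤ A n * ((∏ k ∈ Finset.range n, A k) * ‖x - y‖) :=
            mul_le_mul_of_nonneg_right hAsum hnn
        _ = (∏ k ∈ Finset.range n, A k) * A n * ‖x - y‖ := by ring
  refine Finset.sup'_le _ _ ?_
  rintro ⟨j, i⟩ _
  simp only [hΦ]
  refine le_trans (abs_abs_sub_abs_le_abs_sub _ _) ?_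
  rw [← mul_sub, abs_mul]
  have hCge : |W ℓ j i| ≤ C := by
    rw [hC]
    exact Finset.le_sup' (fun p : Fin (h (ℓ+1)) × Fin (h ℓ) => |W ℓ p.1 p.2|) (Finset.mem_univ (j, i))
  calc |W ℓ j i| * |F ℓ x i - F ℓ y i|
      ≤ C * ((∏ k ∈ Finset.range ℓ, A k) * ‖x - y‖) := by
        refine mul_le_mul hCge (hkey ℓ i) (abs_nonneg _) ?_
        exact le_trans (abs_nonneg _) hCge
    _ = C * (∏ k ∈ Finset.range ℓ, A k) * ‖x - y‖ := by ring
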